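/- Let (Y_n) be a sequence of independent real random variables with Var(Y_n) uniformly bounded and (1/N)∑_{n=1}^N E[Y_n] → 0. Then (1/N)∑_{n=1}^N Y_n → 0 almost surely. -/

import Mathlib

set_option maxHeartbeats 1000000

open MeasureTheory ProbabilityTheory Filter

section Aux
open Finset

private lemma kron_id (a : ℕ → ℝ) (N : ℕ) :
    ∑ n ∈ range N, a n =
      (N : ℝ) * (∑ n ∈ range N, a n / ((n : ℝ) + 1)) -
        ∑ n ∈ range N, (∑ k ∈ range n, a k / ((k : ℝ) + 1)) := by
  induction N with
  | zero => simp
  | succ N ih =>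
    have hN : ((N : ℝ) + 1) ≠ 0 := by positivity
    rw [sum_range_succ, ih, sum_range_succ (fun n => a n / ((n:ℝ)+1)),
      sum_range_succ (fun n => ∑ k ∈ range n, a k / ((k:ℝ)+1))]
    push_cast
    field_simp
    ring

private lemma kronecker {a : ℕ → ℝ} {L : ℝ}
    (h : Tendsto (fun N : ℕ => ∑ n ∈ range N, a n / ((n : ℝ) + 1)) atTop (nhds L)) :
    Tendsto (fun N : ℕ => (1 / (N : ℝ)) * ∑ n ∈ range N, a n) atTop (nhds 0) := by
  have hces := h.cesaro
  have : Tendsto (fun N : ℕ => (∑ n ∈ range N, a n / ((n : ℝ) + 1)) -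
      (N : ℝ)⁻¹ * ∑ n ∈ range N, (∑ k ∈ range n, a k / ((k : ℝ) + 1))) atTop (nhds (L - L)) :=
    h.sub hces
  rw [sub_self] at this
  refine this.congr' ?_
  filter_upwards [eventually_ge_atTop 1] with N hN
  have hN0 : (N : ℝ) ≠ 0 := by
    simp only [ne_eq, Nat.cast_eq_zero]; omega
  rw [kron_id a N]
  rw [mul_sub, one_div, ← mul_assoc, inv_mul_cancel₀ hN0, one_mul]

private lemma sum_inv_sq_le (n : ℕ) : ∑ k ∈ range n, (((k : ℝ) + 1)⁻¹) ^ 2 ≤ 2 := by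
  have h : ∀ m : ℕ, ∑ k ∈ range m, (((k : ℝ) + 1)⁻¹) ^ 2 ≤ 2 - 2 * ((m : ℝ) + 1)⁻¹ := by
    intro m
    induction m with
    | zero => norm_num
    | succ m ih =>
      rw [sum_range_succ]
      have h1 : (((m : ℝ) + 1)⁻¹) ^ 2 ≤ 2 * ((m : ℝ) + 1)⁻¹ - 2 * ((m : ℝ) + 2)⁻¹ := by
        rw [pow_two, ← sub_nonneg]
        have e : 2 * ((m:ℝ)+1)⁻¹ - 2 * ((m:ℝ)+2)⁻¹ - ((m:ℝ)+1)⁻¹ * ((m:ℝ)+1)⁻¹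
            = (m : ℝ) * ((((m:ℝ)+1)^2 * ((m:ℝ)+2))⁻¹) := by
          field_simp
          ring
        rw [e]
        positivity
      have e2 : ((m:ℝ) + 1 + 1) = (m:ℝ) + 2 := by ring
      push_cast
      rw [e2]
      linarith
  calc ∑ k ∈ range n, (((k : ℝ) + 1)⁻¹) ^ 2 ≤ 2 - 2 * ((n : ℝ) + 1)⁻¹ := h n
    _ ≤ 2 := by
        have : (0:ℝ) ≤ 2 * ((n : ℝ) + 1)⁻¹ := by positivity
        linarith

private lemma iIndepFun_ae_eq {Ω : Type*} [MeasureSpace Ω] {f g : ℕ → Ω → ℝ}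
    (hfg : ∀ i, f i =ᵐ[(volume : Measure Ω)] g i)
    (hf : iIndepFun f (volume : Measure Ω)) :
    iIndepFun g (volume : Measure Ω) := by
  rw [iIndepFun_iff_measure_inter_preimage_eq_mul] at hf ⊢
  intro S sets H
  have hae : ∀ i, (f i ⁻¹' sets i : Set Ω) =ᵐ[(volume : Measure Ω)] (g i ⁻¹' sets i) := by
    intro i
    filter_upwards [hfg i] with ω hω
    show (ω ∈ f i ⁻¹' sets i) = (ω ∈ g i ⁻¹' sets i)
    simp only [Set.mem_preimage, hω]
  have h1 : ((⋂ i ∈ S, f i ⁻¹' sets i : Set Ω)) =ᵐ[(volume : Measure Ω)]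
      (⋂ i ∈ S, g i ⁻¹' sets i) := by
    filter_upwards [ae_all_iff.2 hfg] with ω hω
    show (ω ∈ ⋂ i ∈ S, f i ⁻¹' sets i) = (ω ∈ ⋂ i ∈ S, g i ⁻¹' sets i)
    simp only [Set.mem_iInter, Set.mem_preimage, hω]
  rw [← measure_congr h1, hf S H]
  exact Finset.prod_congr rfl fun i _ => measure_congr (hae i)

private lemma variance_ae_eq' {Ω : Type*} [MeasureSpace Ω] {f g : Ω → ℝ}
    (hfg : f =ᵐ[(volume : Measure Ω)] g) : variance f volume = variance g volume := by
  unfold ProbabilityTheory.variance ProbabilityTheory.evariance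
  rw [integral_congr_ae hfg]
  congr 1
  apply lintegral_congr_ae
  filter_upwards [hfg] with ω hω
  rw [hω]

private lemma variance_sub_const' {Ω : Type*} [MeasureSpace Ω]
    [IsProbabilityMeasure (volume : Measure Ω)] {f : Ω → ℝ} (hf : Integrable f volume) (c : ℝ) :
    variance (fun ω => f ω - c) volume = variance f volume := by
  unfold ProbabilityTheory.variance ProbabilityTheory.evariance
  congr 1
  rw [integral_sub hf (integrable_const c), integral_const, probReal_univ]
  apply lintegral_congr
  intro ω
  norm_num

end Aux

/-- Kolmogorov strong law for independent random variables with uniformly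
bounded variances and Cesàro-vanishing means. -/
theorem stmt_13 {Ω : Type*} [MeasureSpace Ω] [IsProbabilityMeasure (volume : Measure Ω)]
    (Y : ℕ → Ω → ℝ)
    (hindep : iIndepFun Y volume)
    (hL2 : ∀ n, MemLp (Y n) 2 volume)
    (M : ℝ) (hvar : ∀ n, variance (Y n) volume ≤ M)
    (hmean : Tendsto (fun N : ℕ => (1 / (N : ℝ)) * ∑ n ∈ Finset.range N, ∫ ω, Y n ω)
      atTop (nhds 0)) :
    ∀ᵐ ω, Tendsto (fun N : ℕ => (1 / (N : ℝ)) * ∑ n ∈ Finset.range N, Y n ω)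
      atTop (nhds 0) := by
  classical
  open Finset in
  have hM0 : 0 ≤ M := le_trans (variance_nonneg (Y 0) volume) (hvar 0)
  set Y' : ℕ → Ω → ℝ := fun n => (hL2 n).1.mk (Y n) with hY'def
  have hY'm : ∀ n, StronglyMeasurable (Y' n) := fun n => (hL2 n).1.stronglyMeasurable_mk
  have hae : ∀ n, Y n =ᵐ[(volume : Measure Ω)] Y' n := fun n => (hL2 n).1.ae_eq_mk
  have hL2' : ∀ n, MemLp (Y' n) 2 volume := fun n => (hL2 n).ae_eq (hae n)
  have hint' : ∀ n, Integrable (Y' n) volume := fun n => (hL2' n).integrable one_le_two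
  set c : ℕ → ℝ := fun n => ∫ ω, Y n ω with hcdef
  have hc' : ∀ n, ∫ ω, Y' n ω = c n := fun n => (integral_congr_ae (hae n)).symm
  set Z : ℕ → Ω → ℝ := fun n ω => (((n : ℝ) + 1))⁻¹ * (Y' n ω - c n) with hZdef
  have hZm : ∀ n, StronglyMeasurable (Z n) :=
    fun n => ((hY'm n).sub stronglyMeasurable_const).const_mul _
  have hZL2 : ∀ n, MemLp (Z n) 2 volume :=
    fun n => ((hL2' n).sub (memLp_const (c n))).const_mul _
  have hZint : ∀ n, Integrable (Z n) volume := fun n => (hZL2 n).integrable one_le_two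
  have hZmean : ∀ n, ∫ ω, Z n ω = 0 := by
    intro n
    rw [hZdef]
    rw [integral_const_mul, integral_sub (hint' n) (integrable_const _), hc' n, integral_const,
      probReal_univ, one_smul, sub_self, mul_zero]
  have hindep' : iIndepFun Y' volume := iIndepFun_ae_eq hae hindep
  have hvar' : ∀ n, variance (Y' n) volume ≤ M := by
    intro n
    rw [← variance_ae_eq' (hae n)]
    exact hvar n
  have hZvar : ∀ n, variance (Z n) volume ≤ (((n : ℝ) + 1)⁻¹) ^ 2 * M := by
    intro n
    rw [hZdef]
    rw [variance_const_mul]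
    rw [variance_sub_const' (hint' n) (c n)]
    exact mul_le_mul_of_nonneg_left (hvar' n) (by positivity)
  have hZindep : ∀ i j : ℕ, i ≠ j → IndepFun (Z i) (Z j) volume := by
    intro i j hij
    have h := hindep'.indepFun hij
    exact h.comp (measurable_id.sub measurable_const |>.const_mul _)
      (measurable_id.sub measurable_const |>.const_mul _)
  -- the martingale of partial sums of `Z`
  set ℱ := Filtration.natural Y' hY'm with hFdef
  set g : ℕ → Ω → ℝ := fun k ω => ∑ n ∈ range (k + 1), Z n ω with hgdef
  have hgint : ∀ k, Integrable (g k) volume :=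
    fun k => integrable_finset_sum _ (fun n _ => hZint n)
  have hgL2 : ∀ k, MemLp (g k) 2 volume := by
    intro k
    have := memLp_finset_sum (range (k + 1)) (fun n _ => hZL2 n)
    exact this
  have hadp : StronglyAdapted ℱ g := by
    intro i
    have : Measurable[ℱ i] fun ω => ∑ n ∈ range (i + 1), Z n ω := by
      apply Finset.measurable_sum
      intro n hn
      have hn' : n ≤ i := by
        simp only [Finset.mem_range] at hn; omega
      have hcom : MeasurableSpace.comap (Y' n) inferInstance ≤ ℱ i :=
        le_iSup₂_of_le n hn' le_rfl
      have hYm : Measurable[ℱ i] (Y' n) := (comap_measurable (Y' n)).mono hcom le_rfl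
      exact ((hYm.sub measurable_const).const_mul _)
    exact this.stronglyMeasurable
  have hmart : Martingale g ℱ volume := by
    apply martingale_nat hadp hgint
    intro i
    have hsplit : g (i + 1) = g i + Z (i + 1) := by
      funext ω
      simp only [hgdef, Pi.add_apply]
      rw [sum_range_succ]
    rw [hsplit]
    have h1 := condExp_add (μ := (volume : Measure Ω)) (m := ℱ i) (hgint i) (hZint (i + 1))
    have h2 : (volume : Measure Ω)[g i | ℱ i] = g i :=
      condExp_of_stronglyMeasurable (ℱ.le i) (hadp i) (hgint i)
    have h3 : (volume : Measure Ω)[Z (i + 1) | ℱ i] =ᵐ[(volume : Measure Ω)]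
        fun _ => ∫ ω, Z (i + 1) ω := by
      refine condExp_indep_eq ((hY'm (i + 1)).measurable.comap_le) (ℱ.le i) ?_ ?_
      · exact (((comap_measurable (Y' (i + 1))).sub measurable_const).const_mul
          _).stronglyMeasurable
      · exact hindep'.indep_comap_natural_of_lt hY'm (Nat.lt_succ_self i)
    filter_upwards [h1, h3] with ω hω1 hω3
    rw [hω1, Pi.add_apply, h2, hω3, hZmean (i + 1), add_zero]
  -- variance / L² bounds
  have hgmean : ∀ k, ∫ ω, g k ω = 0 := by
    intro k
    rw [hgdef]
    rw [integral_finset_sum _ (fun n _ => hZint n)]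
    exact Finset.sum_eq_zero fun n _ => hZmean n
  have hgvar : ∀ k, variance (g k) volume ≤ 2 * M := by
    intro k
    have hgsum : g k = ∑ n ∈ range (k + 1), Z n := by
      funext ω
      simp [hgdef]
    rw [hgsum, IndepFun.variance_sum (fun n _ => hZL2 n)
      (fun i _ j _ hij => hZindep i j hij)]
    calc ∑ n ∈ range (k + 1), variance (Z n) volume
        ≤ ∑ n ∈ range (k + 1), (((n : ℝ) + 1)⁻¹) ^ 2 * M :=
          Finset.sum_le_sum fun n _ => hZvar n
      _ = (∑ n ∈ range (k + 1), (((n : ℝ) + 1)⁻¹) ^ 2) * M := by rw [Finset.sum_mul]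
      _ ≤ 2 * M := mul_le_mul_of_nonneg_right (sum_inv_sq_le (k + 1)) hM0
  have hgnorm2 : ∀ k, eLpNorm (g k) 2 volume ≤ ENNReal.ofReal (Real.sqrt (2 * M)) := by
    intro k
    have he : eLpNorm (g k) 2 volume = evariance (g k) volume ^ (1 / 2 : ℝ) := by
      rw [eLpNorm_eq_lintegral_rpow_enorm_toReal two_ne_zero ENNReal.ofNat_ne_top]
      unfold ProbabilityTheory.evariance
      rw [hgmean k]
      simp only [ENNReal.toReal_ofNat, sub_zero]
      congr 1
      apply lintegral_congr
      intro ω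
      rw [← ENNReal.rpow_natCast]
      norm_num
    rw [he, ← (hgL2 k).ofReal_variance_eq]
    calc ENNReal.ofReal (variance (g k) volume) ^ (1 / 2 : ℝ)
        ≤ ENNReal.ofReal (2 * M) ^ (1 / 2 : ℝ) :=
          ENNReal.rpow_le_rpow (ENNReal.ofReal_le_ofReal (hgvar k)) (by norm_num)
      _ = ENNReal.ofReal ((2 * M) ^ (1 / 2 : ℝ)) := by
          rw [← ENNReal.ofReal_rpow_of_nonneg (by positivity) (by norm_num)]
      _ = ENNReal.ofReal (Real.sqrt (2 * M)) := by
          rw [Real.sqrt_eq_rpow]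
  have hbdd : ∀ k, eLpNorm (g k) 1 volume ≤ (Real.sqrt (2 * M)).toNNReal := by
    intro k
    refine le_trans (eLpNorm_le_eLpNorm_of_exponent_le one_le_two (hgL2 k).1) ?_
    simpa [ENNReal.ofReal] using hgnorm2 k
  have hconv := hmart.submartingale.exists_ae_tendsto_of_bdd hbdd
  -- conclusion via Kronecker's lemma
  filter_upwards [hconv, ae_all_iff.2 hae] with ω hω hYeq
  obtain ⟨l, hl⟩ := hω
  have hb : Tendsto (fun N : ℕ => ∑ n ∈ range N, (Y' n ω - c n) / ((n : ℝ) + 1)) atTop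
      (nhds l) := by
    rw [← tendsto_add_atTop_iff_nat 1]
    refine hl.congr ?_
    intro k
    simp only [hgdef, hZdef]
    refine Finset.sum_congr rfl fun n _ => ?_
    rw [inv_mul_eq_div]
  have h1 := kronecker hb
  have h3 := h1.add hmean
  rw [add_zero] at h3
  refine h3.congr fun N => ?_
  rw [← mul_add, ← Finset.sum_add_distrib]
  congr 1
  refine Finset.sum_congr rfl fun n _ => ?_
  show Y' n ω - c n + c n = Y n ω
  rw [sub_add_cancel]
  exact (hYeq n).symm
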